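/- Let f : X → Y be a prestreak morphism between archimedean prestreaks X and Y. Then f preserves and reflects all comparisons: for all x, y ∈ X and q ∈ ℚ, x < q ⟺ f(x) < q, q < y ⟺ q < f(y), and x < y ⟺ f(x) < f(y). -/
import Mathlib


/-- A prestreak: a strict order (asymmetric and cotransitive) together with a
commutative additive monoid structure and a commutative multiplicative monoid
structure on the positive part, compatible with the order.  (The intrinsic
topology conditions of the paper are omitted, being vacuous in the classical
set-theoretic setting.) -/
structure Prestreak (X : Type*) where
  lt : X → X → Prop
  add : X → X → X
  zero : X
  mul : X → X → X
  one : X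
  lt_asymm : ∀ a b, ¬ (lt a b ∧ lt b a)
  lt_cotrans : ∀ a b x, lt a b → lt a x ∨ lt x b
  add_comm : ∀ a b, add a b = add b a
  add_assoc : ∀ a b c, add (add a b) c = add a (add b c)
  add_zero : ∀ a, add a zero = a
  zero_lt_one : lt zero one
  mul_pos : ∀ a b, lt zero a → lt zero b → lt zero (mul a b)
  mul_comm : ∀ a b, lt zero a → lt zero b → mul a b = mul b a
  mul_assoc : ∀ a b c, lt zero a → lt zero b → lt zero c →
    mul (mul a b) c = mul a (mul b c)
  mul_one : ∀ a, lt zero a → mul a one = a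
  mul_add : ∀ a b c, lt zero a → lt zero b → lt zero c →
    mul (add a b) c = add (mul a c) (mul b c)
  add_lt_add_iff : ∀ a b x, (lt (add a x) (add b x) ↔ lt a b)
  mul_lt_mul_iff : ∀ a b x, lt zero a → lt zero b → lt zero x →
    (lt (mul a x) (mul b x) ↔ lt a b)

namespace Prestreak

variable {X : Type*}

/-- Multiplication by a natural number: `0·a = 0`, `(n+1)·a = n·a + a`. -/
def nsmul (P : Prestreak X) : ℕ → X → X
  | 0, _ => P.zero
  | n + 1, a => P.add (nsmul P n a) a

/-- The canonical image of a natural number, `n ↦ n·1`. -/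
def ofNat (P : Prestreak X) (n : ℕ) : X := P.nsmul n P.one

/-- Comparison `x < q` of an element of a prestreak with a rational number,
using the canonical representation `q = (q.num⁺ − q.num⁻)/q.den`:
`x < (a−b)/c  :=  c·x + b < a`. -/
def ltQ (P : Prestreak X) (x : X) (q : ℚ) : Prop :=
  P.lt (P.add (P.nsmul q.den x) (P.ofNat ((-q.num).toNat))) (P.ofNat q.num.toNat)

/-- Comparison `q < x` of a rational with an element of a prestreak:
`(a−b)/c < x  :=  a < c·x + b`. -/
def qLt (P : Prestreak X) (q : ℚ) (x : X) : Prop :=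
  P.lt (P.ofNat q.num.toNat) (P.add (P.nsmul q.den x) (P.ofNat ((-q.num).toNat)))

/-- The archimedean property for prestreaks. -/
def Archimedean (P : Prestreak X) : Prop :=
  ∀ a b c d : X, P.lt b d →
    ∃ n : ℕ, P.lt (P.add a (P.nsmul n b)) (P.add c (P.nsmul n d))

/-- Tightness: antisymmetry of `≤` (where `a ≤ b := ¬ b < a`).
A streak is a tight archimedean prestreak. -/
def Tight (P : Prestreak X) : Prop :=
  ∀ a b : X, ¬ P.lt a b → ¬ P.lt b a → a = b

/-- The apartness relation `a # b := a < b ∨ b < a`. -/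
def Apart (P : Prestreak X) (a b : X) : Prop := P.lt a b ∨ P.lt b a

/-- A morphism of prestreaks: preserves `<`, `+`, `0`, `1` and products of
positive elements. -/
def IsHom {Y : Type*} (P : Prestreak X) (Q : Prestreak Y) (f : X → Y) : Prop :=
  (∀ a b, P.lt a b → Q.lt (f a) (f b)) ∧
  (∀ a b, f (P.add a b) = Q.add (f a) (f b)) ∧
  f P.zero = Q.zero ∧ f P.one = Q.one ∧
  (∀ a b, P.lt P.zero a → P.lt P.zero b → f (P.mul a b) = Q.mul (f a) (f b))

/-- A multiplicative structure on a prestreak: a total multiplication which is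
commutative, associative, distributes over addition, has unit `1`, restricts to
the given multiplication on positive elements, and satisfies the multiplicity
condition. -/
def IsMultiplicative (P : Prestreak X) (tmul : X → X → X) : Prop :=
  (∀ a b, tmul a b = tmul b a) ∧
  (∀ a b c, tmul (tmul a b) c = tmul a (tmul b c)) ∧
  (∀ a b c, tmul (P.add a b) c = P.add (tmul a c) (tmul b c)) ∧
  (∀ a, tmul a P.one = a) ∧
  (∀ a b, P.lt P.zero a → P.lt P.zero b → tmul a b = P.mul a b) ∧
  (∀ a b c d, P.lt b a → P.lt d c →
    P.lt (P.add (tmul a d) (tmul b c)) (P.add (tmul a c) (tmul b d)))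

variable (P : Prestreak X)

lemma asymm' {a b : X} (h : P.lt a b) : ¬ P.lt b a := fun h' => P.lt_asymm a b ⟨h, h'⟩

lemma trans' {a b c : X} (h1 : P.lt a b) (h2 : P.lt b c) : P.lt a c := by
  rcases P.lt_cotrans a b c h1 with h | h
  · exact h
  · exact absurd h2 (P.asymm' h)

lemma zero_add' (a : X) : P.add P.zero a = a := by rw [P.add_comm]; exact P.add_zero a

lemma nsmul_zero' (n : ℕ) : P.nsmul n P.zero = P.zero := by
  induction n with
  | zero => rfl
  | succ n ih =>
      show P.add (P.nsmul n P.zero) P.zero = P.zero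
      rw [P.add_zero, ih]

lemma nsmul_add' (m n : ℕ) (a : X) :
    P.nsmul (m + n) a = P.add (P.nsmul m a) (P.nsmul n a) := by
  induction n with
  | zero =>
      rw [show P.nsmul 0 a = P.zero from rfl, P.add_zero]
      rfl
  | succ n ih =>
      show P.add (P.nsmul (m + n) a) a = _
      rw [ih, P.add_assoc]
      rfl

lemma ofNat_add' (m n : ℕ) :
    P.ofNat (m + n) = P.add (P.ofNat m) (P.ofNat n) := P.nsmul_add' m n P.one

lemma lt_add_one' (z : X) : P.lt z (P.add z P.one) := by
  have := (P.add_lt_add_iff P.zero P.one z).mpr P.zero_lt_one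
  rwa [P.zero_add', P.add_comm] at this

lemma ofNat_lt_succ (k : ℕ) : P.lt (P.ofNat k) (P.ofNat (k + 1)) := P.lt_add_one' _

lemma zero_lt_ofNat (k : ℕ) (hk : 0 < k) : P.lt P.zero (P.ofNat k) := by
  induction k with
  | zero => omega
  | succ k ih =>
      rcases Nat.eq_zero_or_pos k with h0 | hpos
      · subst h0
        have : P.ofNat 1 = P.add P.zero P.one := rfl
        rw [this]
        exact P.lt_add_one' P.zero
      · exact P.trans' (ih hpos) (P.ofNat_lt_succ k)

lemma not_lt_add {a b c d : X} (h1 : ¬ P.lt a b) (h2 : ¬ P.lt c d) :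
    ¬ P.lt (P.add a c) (P.add b d) := by
  intro h
  rcases P.lt_cotrans _ _ (P.add b c) h with h' | h'
  · exact h1 ((P.add_lt_add_iff a b c).mp h')
  · apply h2
    rw [P.add_comm b c, P.add_comm b d] at h'
    exact (P.add_lt_add_iff c d b).mp h'

lemma nsmul_not_lt {x y : X} (h : ¬ P.lt x y) (n : ℕ) :
    ¬ P.lt (P.nsmul n x) (P.nsmul n y) := by
  induction n with
  | zero => exact fun h' => P.lt_asymm _ _ ⟨h', h'⟩
  | succ n ih => exact P.not_lt_add ih h

variable {Y : Type*} {Q : Prestreak Y} {f : X → Y}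

lemma map_nsmul (hf : P.IsHom Q f) (n : ℕ) (a : X) :
    f (P.nsmul n a) = Q.nsmul n (f a) := by
  induction n with
  | zero => exact hf.2.2.1
  | succ n ih =>
      show f (P.add (P.nsmul n a) a) = _
      rw [hf.2.1, ih]
      rfl

lemma map_ofNat (hf : P.IsHom Q f) (n : ℕ) : f (P.ofNat n) = Q.ofNat n := by
  rw [show P.ofNat n = P.nsmul n P.one from rfl, P.map_nsmul hf, hf.2.2.2.1]
  rfl

theorem hom_reflects (hQ : Q.Archimedean) (hf : P.IsHom Q f) {x y : X}
    (h : Q.lt (f x) (f y)) : P.lt x y := by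
  classical
  by_contra hxy
  obtain ⟨n, hn⟩ := hQ (Q.ofNat 3) (f x) Q.zero (f y) h
  rw [Q.zero_add'] at hn
  -- hn : Q.lt (Q.add (Q.ofNat 3) (Q.nsmul n (f x))) (Q.nsmul n (f y))
  obtain ⟨M, hM⟩ := hQ Q.zero Q.zero (Q.nsmul n (f x)) Q.one Q.zero_lt_one
  rw [Q.nsmul_zero', Q.zero_add'] at hM
  set u : Y := Q.add (Q.nsmul n (f x)) (Q.ofNat M) with hu
  set v : Y := Q.add (Q.nsmul n (f y)) (Q.ofNat M) with hv
  have hMu : Q.lt Q.zero u := hM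
  have h3u : Q.lt (Q.add (Q.ofNat 3) u) v := by
    have := (Q.add_lt_add_iff _ _ (Q.ofNat M)).mpr hn
    rwa [Q.add_assoc] at this
  obtain ⟨N, hN⟩ := hQ u Q.zero Q.zero Q.one Q.zero_lt_one
  rw [Q.nsmul_zero', Q.add_zero, Q.zero_add'] at hN
  have hex : ∃ m : ℕ, Q.lt u (Q.ofNat m) := ⟨N, hN⟩
  set k := Nat.find hex with hkdef
  have hk : Q.lt u (Q.ofNat k) := Nat.find_spec hex
  have hk1 : 1 ≤ k := by
    by_contra hk0
    have h0 : k = 0 := by omega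
    rw [h0] at hk
    exact Q.lt_asymm _ _ ⟨hMu, hk⟩
  have hmin : ¬ Q.lt u (Q.ofNat (k - 1)) := Nat.find_min hex (by omega)
  have hC1 : Q.lt (Q.ofNat (k + 2)) v := by
    rcases Q.lt_cotrans _ _ (Q.ofNat (k + 2)) h3u with h' | h'
    · exfalso
      apply hmin
      have e2 : k + 2 = (k - 1) + 3 := by omega
      rw [e2, Q.ofNat_add', Q.add_comm (Q.ofNat 3) u] at h'
      exact (Q.add_lt_add_iff _ _ _).mp h'
    · exact h'
  set u' : X := P.add (P.nsmul n x) (P.ofNat M) with hu'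
  set v' : X := P.add (P.nsmul n y) (P.ofNat M) with hv'
  have hfu : f u' = u := by
    rw [hu', hf.2.1, P.map_nsmul hf, P.map_ofNat hf]
  have hfv : f v' = v := by
    rw [hv', hf.2.1, P.map_nsmul hf, P.map_ofNat hf]
  have hC2 : P.lt u' (P.ofNat (k + 1)) := by
    rcases P.lt_cotrans _ _ u' (P.ofNat_lt_succ k) with h' | h'
    · exfalso
      have h2 := hf.1 _ _ h'
      rw [P.map_ofNat hf, hfu] at h2
      exact Q.lt_asymm _ _ ⟨hk, h2⟩
    · exact h'
  have hC3 : P.lt (P.ofNat (k + 1)) v' := by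
    rcases P.lt_cotrans _ _ v' (P.ofNat_lt_succ (k + 1)) with h' | h'
    · exact h'
    · exfalso
      have h2 := hf.1 _ _ h'
      rw [P.map_ofNat hf, hfv] at h2
      exact Q.lt_asymm _ _ ⟨hC1, h2⟩
  have huv : P.lt u' v' := P.trans' hC2 hC3
  have hnn : P.lt (P.nsmul n x) (P.nsmul n y) := (P.add_lt_add_iff _ _ _).mp huv
  exact P.nsmul_not_lt hxy n hnn

end Prestreak

/-- A prestreak morphism between archimedean prestreaks preserves and reflects
all comparisons (with rationals on either side, and internal). -/
theorem hom_preserves_and_reflects_order {X Y : Type*}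
    (P : Prestreak X) (Q : Prestreak Y)
    (hP : P.Archimedean) (hQ : Q.Archimedean)
    (f : X → Y) (hf : P.IsHom Q f) :
    ∀ (x y : X) (q : ℚ),
      (P.ltQ x q ↔ Q.ltQ (f x) q) ∧
      (P.qLt q y ↔ Q.qLt q (f y)) ∧
      (P.lt x y ↔ Q.lt (f x) (f y)) := by
  intro x y q
  have key : ∀ a b : X, P.lt a b ↔ Q.lt (f a) (f b) :=
    fun a b => ⟨hf.1 a b, fun h => Prestreak.hom_reflects P hQ hf h⟩
  refine ⟨?_, ?_, key x y⟩
  · have h := key (P.add (P.nsmul q.den x) (P.ofNat (-q.num).toNat))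
      (P.ofNat q.num.toNat)
    rw [hf.2.1, P.map_nsmul hf, P.map_ofNat hf, P.map_ofNat hf] at h
    exact h
  · have h := key (P.ofNat q.num.toNat)
      (P.add (P.nsmul q.den y) (P.ofNat (-q.num).toNat))
    rw [hf.2.1, P.map_nsmul hf, P.map_ofNat hf, P.map_ofNat hf] at h
    exact h
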